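/- If c: X×Y → ℝ is L-Lipschitz in y (uniformly in x), then for any u ∈ L_exp^ε(ρ₁), the entropic transform u^{(c,ε)}(y) = -ε log ∫ e^{(u(x)-c(x,y))/ε} dρ₁(x) is L-Lipschitz in y. -/

import Mathlib

open MeasureTheory Real

noncomputable section

/-- The entropic `(c,ε)`-transform of `u`. -/
def transform {X Y : Type*} [MeasurableSpace X] (ρ₁ : Measure X)
    (c : X → Y → ℝ) (ε : ℝ) (u : X → ℝ) : Y → ℝ :=
  fun y => -ε * Real.log (∫ x, Real.exp ((u x - c x y) / ε) ∂ρ₁)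

theorem transform_lipschitz
    {X Y : Type*}
    [MeasurableSpace X] [TopologicalSpace X] [PolishSpace X] [BorelSpace X]
    [MetricSpace Y]
    (ρ₁ : Measure X) [IsProbabilityMeasure ρ₁]
    (ε : ℝ) (hε : 0 < ε)
    (c : X → Y → ℝ) (hcm : ∀ y, Measurable (fun x => c x y))
    (L : ℝ) (hL : ∀ x y y', |c x y - c x y'| ≤ L * dist y y')
    (u : X → ℝ) (hu : Measurable u)
    (hint : Integrable (fun x => Real.exp (u x / ε)) ρ₁)
    (hpos : 0 < ∫ x, Real.exp (u x / ε) ∂ρ₁)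
    (hintc : ∀ y, Integrable (fun x => Real.exp ((u x - c x y) / ε)) ρ₁)
    (hposc : ∀ y, 0 < ∫ x, Real.exp ((u x - c x y) / ε) ∂ρ₁) :
    ∀ y y' : Y, |transform ρ₁ c ε u y - transform ρ₁ c ε u y'| ≤ L * dist y y' := by
  intro y y'
  have key : ∀ a b : Y, Real.log (∫ x, Real.exp ((u x - c x a) / ε) ∂ρ₁)
      - Real.log (∫ x, Real.exp ((u x - c x b) / ε) ∂ρ₁) ≤ L * dist a b / ε := by
    intro a b
    have hmono : (∫ x, Real.exp ((u x - c x a) / ε) ∂ρ₁)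
        ≤ (∫ x, Real.exp ((u x - c x b) / ε) ∂ρ₁) * Real.exp (L * dist a b / ε) := by
      have : (∫ x, Real.exp ((u x - c x a) / ε) ∂ρ₁)
          ≤ ∫ x, Real.exp ((u x - c x b) / ε) * Real.exp (L * dist a b / ε) ∂ρ₁ := by
        refine integral_mono (hintc a) ((hintc b).mul_const _) ?_
        intro x
        simp only
        rw [← Real.exp_add]
        apply Real.exp_le_exp.2
        rw [← add_div, div_le_div_iff_of_pos_right hε]
        have := (abs_le.1 (hL x b a)).2
        have hd : dist b a = dist a b := dist_comm b a
        linarith [this, hd ▸ this]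
      simpa [integral_mul_const] using this
    have h1 : Real.log (∫ x, Real.exp ((u x - c x a) / ε) ∂ρ₁)
        ≤ Real.log ((∫ x, Real.exp ((u x - c x b) / ε) ∂ρ₁) * Real.exp (L * dist a b / ε)) :=
      Real.log_le_log (hposc a) hmono
    rw [Real.log_mul (ne_of_gt (hposc b)) (Real.exp_ne_zero _), Real.log_exp] at h1
    linarith
  have h1 := key y y'
  have h2 := key y' y
  rw [dist_comm y' y] at h2
  unfold transform
  rw [abs_le]
  constructor <;> nlinarith [mul_le_mul_of_nonneg_left h1 (le_of_lt hε),
    mul_le_mul_of_nonneg_left h2 (le_of_lt hε), mul_div_cancel₀ (L * dist y y') (ne_of_gt hε)]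

end
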